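/- If C is u-bounded relative to B with parameters [n,k,d] and u ≥ d(1 + i/k), then the i-fold iterated construction Code(B,i) has minimum distance exactly dᵢ = d·∏_{j=1}^i (k+j), and is uᵢ-bounded relative to Basis(B,i) with uᵢ = u·∏_{j=1}^i (k+j−1) if and only if u ≥ d(1 + (i+1)/k). -/
import Mathlib


open scoped Classical in
noncomputable def wt {F : Type*} [Field F] {m : ℕ} (v : Fin m → F) : ℕ :=
  (Finset.univ.filter fun p => v p ≠ 0).card

/-- `d` is the minimum distance of the linear code `C`. -/
noncomputable def IsMinDist {F : Type*} [Field F] {m : ℕ} (C : Submodule F (Fin m → F)) (d : ℕ) : Prop :=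
  (∀ w ∈ C, w ≠ 0 → d ≤ wt w) ∧ ∃ w ∈ C, w ≠ 0 ∧ wt w = d

/-- The cyclic-shift vectors of Construction 3.2: `shiftVec n k a t` is the vector in
`F^{(k+1)n}` whose `(k+1)` blocks of size `n` are zero in block `t` and the vectors
`a 0, ..., a (k-1)` read cyclically in the remaining blocks. -/
def shiftVec {F : Type*} [Field F] (n k : ℕ) (a : Fin k → Fin n → F) (t : Fin (k + 1)) :
    Fin ((k + 1) * n) → F :=
  fun p =>
    if h : p.val / n = t.val then 0
    else
      have hn : 0 < n := by
        rcases Nat.eq_zero_or_pos n with h0 | h0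
        · exact absurd p.isLt (by simp [h0])
        · exact h0
      have hi : p.val / n < k + 1 :=
        Nat.div_lt_of_lt_mul (Nat.mul_comm (k + 1) n ▸ p.isLt)
      a ⟨(if t.val ≤ p.val / n then p.val / n - t.val else p.val / n + (k + 1) - t.val) - 1,
          by
            have ht := t.isLt
            generalize hq : p.val / n = q at h hi ⊢
            split_ifs with h2 <;> omega⟩
        ⟨p.val % n, Nat.mod_lt _ hn⟩

/-- `C = span a` is `u`-bounded relative to the ordered basis `a`, with minimum distance `d`:
all basis vectors have weight `u`, their sum has weight `d`, and `u ≥ d(1 + 1/k)`. -/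
noncomputable def UBounded {F : Type*} [Field F] {n k : ℕ} (a : Fin k → Fin n → F)
    (u d : ℕ) : Prop :=
  IsMinDist (Submodule.span F (Set.range a)) d ∧
  (∀ j, wt (a j) = u) ∧ wt (∑ j, a j) = d ∧ d * (k + 1) ≤ u * k

/-- Length of the code obtained after `i` applications of the construction. -/
def iterLen (n k : ℕ) : ℕ → ℕ
  | 0 => n
  | (i + 1) => (k + i + 1) * iterLen n k i

/-- `Basis(B, i)`: the basis obtained by `i` iterated applications of the construction. -/
def iterBasis {F : Type*} [Field F] (n k : ℕ) (a : Fin k → Fin n → F) :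
    (i : ℕ) → Fin (k + i) → Fin (iterLen n k i) → F
  | 0 => a
  | (i + 1) => shiftVec (iterLen n k i) (k + i) (iterBasis n k a i)


section basic
variable {F : Type*} [Field F] {m : ℕ}

lemma wt_eq_zero_iff (v : Fin m → F) : wt v = 0 ↔ v = 0 := by
  classical
  unfold wt
  rw [Finset.card_eq_zero, Finset.filter_eq_empty_iff]
  constructor
  · intro h; funext p; have := h (Finset.mem_univ p); simpa using this
  · intro h p _; simp [h]

lemma wt_smul {c : F} (hc : c ≠ 0) (v : Fin m → F) : wt (c • v) = wt v := by
  classical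
  unfold wt
  congr 1
  apply Finset.filter_congr
  intro p _
  simp [Pi.smul_apply, smul_eq_mul, hc]

lemma wt_zero : wt (0 : Fin m → F) = 0 := by
  rw [wt_eq_zero_iff]
end basic

section blocks
variable {F : Type*} [Field F] {n k : ℕ}

def embIdx {n k : ℕ} (s : Fin (k+1)) (r : Fin n) : Fin ((k+1)*n) :=
  ⟨s.val * n + r.val, by
    calc s.val * n + r.val < s.val * n + n := Nat.add_lt_add_left r.isLt _
      _ = (s.val + 1) * n := by ring
      _ ≤ (k+1) * n := Nat.mul_le_mul_right _ (by omega)⟩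

def blk (v : Fin ((k+1)*n) → F) (s : Fin (k+1)) : Fin n → F := fun r => v (embIdx s r)

lemma embIdx_div' (hn : 0 < n) (s : Fin (k+1)) (r : Fin n) : (s.val * n + r.val) / n = s.val := by
  rw [Nat.add_div hn]
  simp [Nat.mul_div_cancel _ hn, Nat.div_eq_of_lt r.isLt, Nat.mod_eq_of_lt r.isLt,
    Nat.not_le_of_lt r.isLt, Nat.mul_mod_left]

def blockEquiv (n k : ℕ) (hn : 0 < n) : Fin (k+1) × Fin n ≃ Fin ((k+1)*n) where
  toFun q := embIdx q.1 q.2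
  invFun p := (⟨p.val / n, Nat.div_lt_of_lt_mul (Nat.mul_comm (k + 1) n ▸ p.isLt)⟩,
               ⟨p.val % n, Nat.mod_lt _ hn⟩)
  left_inv q := by
    obtain ⟨s, r⟩ := q
    have h1 : (s.val * n + r.val) / n = s.val := embIdx_div' hn s r
    have h2 : (s.val * n + r.val) % n = by exact (s.val * n + r.val) % n := rfl
    ext <;> simp [embIdx, h1, Nat.add_mod, Nat.mul_mod_left, Nat.mod_eq_of_lt r.isLt]
  right_inv p := by
    apply Fin.ext
    exact Nat.div_add_mod' _ _

lemma embIdx_div (hn : 0 < n) (s : Fin (k+1)) (r : Fin n) : (s.val * n + r.val) / n = s.val := by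
  rw [Nat.add_div hn]
  simp [Nat.mul_div_cancel _ hn, Nat.div_eq_of_lt r.isLt, Nat.mod_eq_of_lt r.isLt,
    Nat.not_le_of_lt r.isLt, Nat.mul_mod_left]

lemma embIdx_mod (s : Fin (k+1)) (r : Fin n) : (s.val * n + r.val) % n = r.val := by
  simp [Nat.add_mod, Nat.mul_mod_left, Nat.mod_eq_of_lt r.isLt]

end blocks

section blocks2
variable {F : Type*} [Field F] {n k : ℕ}

lemma wt_eq_sum_blk (hn : 0 < n) (v : Fin ((k+1)*n) → F) :
    wt v = ∑ s : Fin (k+1), wt (blk v s) := by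
  classical
  unfold wt
  simp only [Finset.card_filter]
  rw [← Equiv.sum_comp (blockEquiv n k hn) (fun p => if v p ≠ 0 then 1 else 0)]
  rw [Fintype.sum_prod_type]
  rfl

lemma blk_sum {ι : Type*} (s : Finset ι) (g : ι → Fin ((k+1)*n) → F) (t : Fin (k+1)) :
    blk (∑ i ∈ s, g i) t = ∑ i ∈ s, blk (g i) t := by
  funext r
  simp [blk, Finset.sum_apply]

lemma blk_smul (c : F) (v : Fin ((k+1)*n) → F) (t : Fin (k+1)) :
    blk (c • v) t = c • blk v t := by
  funext r; simp [blk]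

end blocks2


section idx
variable {F : Type*} [Field F] {n k : ℕ}

lemma idx_lt (s t : Fin (k+1)) (h : s ≠ t) :
    (if t.val ≤ s.val then s.val - t.val else s.val + (k + 1) - t.val) - 1 < k := by
  have hs := s.isLt; have ht := t.isLt
  have : s.val ≠ t.val := fun hc => h (Fin.ext hc)
  split_ifs with h2 <;> omega

def idxF (s t : Fin (k+1)) (h : s ≠ t) : Fin k :=
  ⟨(if t.val ≤ s.val then s.val - t.val else s.val + (k + 1) - t.val) - 1, idx_lt s t h⟩

def tOf (k : ℕ) (s : Fin (k+1)) (j : Fin k) : Fin (k+1) :=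
  ⟨(s.val + k - j.val) % (k+1), Nat.mod_lt _ (Nat.succ_pos k)⟩

lemma idxF_val (s t : Fin (k+1)) (h : s ≠ t) :
    (idxF s t h).val = (if t.val ≤ s.val then s.val - t.val else s.val + (k + 1) - t.val) - 1 :=
  rfl

lemma tOf_mod (s : Fin (k+1)) (j : Fin k) :
    (tOf k s j).val = if s.val ≤ j.val then s.val + k - j.val else s.val - j.val - 1 := by
  have hs := s.isLt; have hj := j.isLt
  show (s.val + k - j.val) % (k+1) = _
  rcases le_or_gt (k+1) (s.val + k - j.val) with h | h
  · rw [Nat.mod_eq_sub_mod h, Nat.mod_eq_of_lt (by omega)]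
    split_ifs <;> omega
  · rw [Nat.mod_eq_of_lt h]
    split_ifs <;> omega

lemma tOf_ne (s : Fin (k+1)) (j : Fin k) : tOf k s j ≠ s := by
  have hs := s.isLt; have hj := j.isLt
  intro hc
  have := congrArg Fin.val hc
  rw [tOf_mod] at this
  split_ifs at this <;> omega

lemma idxF_tOf (s : Fin (k+1)) (j : Fin k) (h : s ≠ tOf k s j) :
    idxF s (tOf k s j) h = j := by
  have hs := s.isLt; have hj := j.isLt
  apply Fin.ext
  rw [idxF_val, tOf_mod]
  split_ifs <;> omega

lemma tOf_idxF (s t : Fin (k+1)) (h : s ≠ t) : tOf k s (idxF s t h) = t := by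
  have hs := s.isLt; have ht := t.isLt
  have hne : s.val ≠ t.val := fun hc => h (Fin.ext hc)
  apply Fin.ext
  rw [tOf_mod, idxF_val]
  split_ifs <;> omega

end idx

section bshift
variable {F : Type*} [Field F] {n k : ℕ}

lemma blk_shiftVec (hn : 0 < n) (a : Fin k → Fin n → F) (t s : Fin (k+1)) :
    blk (shiftVec n k a t) s = if h : s = t then 0 else a (idxF s t h) := by
  funext r
  have hdiv : ((embIdx s r : Fin ((k+1)*n))).val / n = s.val := embIdx_div' hn s r
  have hmod : ((embIdx s r : Fin ((k+1)*n))).val % n = r.val := embIdx_mod s r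
  show shiftVec n k a t (embIdx s r) = _
  unfold shiftVec
  by_cases h : s = t
  · rw [dif_pos (by rw [hdiv, h]), dif_pos h]
    rfl
  · rw [dif_neg (by rw [hdiv]; exact fun hc => h (Fin.ext hc)),
      dif_neg h]
    refine congr (congrArg a ?_) (Fin.ext hmod)
    apply Fin.ext
    show (if t.val ≤ (embIdx s r : Fin ((k+1)*n)).val / n then _ else _) - 1 = _
    rw [idxF_val, hdiv]

end bshift

section combo
variable {F : Type*} [Field F] {n k : ℕ}

lemma tOf_inj (s : Fin (k+1)) : Function.Injective (tOf k s) := by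
  intro j j' hjj
  have h := tOf_ne s j
  have := idxF_tOf s j (Ne.symm h)
  rw [← this]
  have h' := tOf_ne s j'
  have h2 := idxF_tOf s j' (Ne.symm h')
  conv_rhs => rw [← h2]
  congr 1

lemma sum_tOf {M : Type*} [AddCommMonoid M] (s : Fin (k+1)) (g : Fin (k+1) → M)
    (hgs : g s = 0) : ∑ t, g t = ∑ j : Fin k, g (tOf k s j) := by
  classical
  have himg : (Finset.univ.image (tOf k s)) = Finset.univ.erase s := by
    apply Finset.eq_of_subset_of_card_le
    · intro t ht
      simp only [Finset.mem_image] at ht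
      obtain ⟨j, _, rfl⟩ := ht
      exact Finset.mem_erase.mpr ⟨tOf_ne s j, Finset.mem_univ _⟩
    · rw [Finset.card_erase_of_mem (Finset.mem_univ s),
        Finset.card_image_of_injective _ (tOf_inj s)]
      simp
  rw [← Finset.sum_image (fun j _ j' _ h => tOf_inj s h), himg,
    Finset.sum_erase _ hgs]

lemma blk_combo (hn : 0 < n) (a : Fin k → Fin n → F) (c : Fin (k+1) → F) (s : Fin (k+1)) :
    blk (∑ t, c t • shiftVec n k a t) s = ∑ j : Fin k, c (tOf k s j) • a j := by
  rw [blk_sum]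
  have h1 : ∀ t, blk (c t • shiftVec n k a t) s
      = c t • (if h : s = t then 0 else a (idxF s t h)) := by
    intro t; rw [blk_smul, blk_shiftVec hn]
  simp only [h1]
  rw [sum_tOf s _ (by simp)]
  apply Finset.sum_congr rfl
  intro j _
  rw [dif_neg (Ne.symm (tOf_ne s j)), idxF_tOf]

end combo


section step
variable {F : Type*} [Field F] {n k : ℕ}

lemma step_lemma (a : Fin k → Fin n → F) (ha : LinearIndependent F a) (u d : ℕ)
    (hmin : IsMinDist (Submodule.span F (Set.range a)) d)
    (hw : ∀ j, wt (a j) = u) (hsum : wt (∑ j, a j) = d)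
    (hud : d * (k + 1) ≤ u * k) :
    LinearIndependent F (shiftVec n k a) ∧
    IsMinDist (Submodule.span F (Set.range (shiftVec n k a))) (d * (k + 1)) ∧
    (∀ t, wt (shiftVec n k a t) = u * k) ∧
    wt (∑ t, shiftVec n k a t) = d * (k + 1) := by
  classical
  obtain ⟨hlow, w₀, hw₀mem, hw₀ne, hw₀wt⟩ := hmin
  have hd : 1 ≤ d := by
    rcases Nat.eq_zero_or_pos d with rfl | h
    · exact absurd ((wt_eq_zero_iff w₀).mp hw₀wt) hw₀ne
    · exact h
  have hn : 0 < n := by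
    obtain ⟨p, -⟩ := Function.ne_iff.mp hw₀ne
    exact p.pos
  have hk : 1 ≤ k := by
    rcases Nat.eq_zero_or_pos k with rfl | h
    · simp at hud; omega
    · exact h
  have haf := Fintype.linearIndependent_iff.mp ha
  -- weight of each basis vector
  have wtbt : ∀ t, wt (shiftVec n k a t) = u * k := by
    intro t
    rw [wt_eq_sum_blk hn]
    have hbv : ∀ s : Fin (k+1), wt (blk (shiftVec n k a t) s) = if s = t then 0 else u := by
      intro s
      rw [blk_shiftVec hn]
      by_cases h : s = t
      · rw [dif_pos h, if_pos h, wt_zero]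
      · rw [dif_neg h, if_neg h, hw]
    simp only [hbv]
    rw [← Finset.sum_erase_add _ _ (Finset.mem_univ t), if_pos rfl, add_zero]
    rw [Finset.sum_congr rfl (fun s hs => if_neg (Finset.ne_of_mem_erase hs)),
      Finset.sum_const, Finset.card_erase_of_mem (Finset.mem_univ t)]
    simp [mul_comm]
  -- weight of the sum of basis vectors
  have wtsum : wt (∑ t, shiftVec n k a t) = d * (k+1) := by
    have hrepr : ∑ t, shiftVec n k a t = ∑ t, (1:F) • shiftVec n k a t := by simp
    rw [hrepr, wt_eq_sum_blk hn]
    have hbv : ∀ s : Fin (k+1), wt (blk (∑ t, (1:F) • shiftVec n k a t) s) = d := by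
      intro s
      rw [blk_combo hn]
      simp only [one_smul]
      exact hsum
    simp only [hbv, Finset.sum_const, Finset.card_univ, Fintype.card_fin, smul_eq_mul]
    exact Nat.mul_comm _ _
  -- key lower bound
  have key : ∀ c : Fin (k+1) → F, (∃ t, c t ≠ 0) →
      d * (k+1) ≤ wt (∑ t, c t • shiftVec n k a t) := by
    intro c hc
    by_cases h2 : ∃ t t', c t ≠ 0 ∧ c t' ≠ 0 ∧ t ≠ t'
    · rw [wt_eq_sum_blk hn]
      have hblock : ∀ s, d ≤ wt (blk (∑ t, c t • shiftVec n k a t) s) := by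
        intro s
        rw [blk_combo hn]
        apply hlow
        · exact Submodule.sum_smul_mem _ _ (fun j _ => Submodule.subset_span ⟨j, rfl⟩)
        · obtain ⟨t, t', h1, h1', hne⟩ := h2
          have hpick : ∃ t'', c t'' ≠ 0 ∧ t'' ≠ s := by
            by_cases hts : t = s
            · exact ⟨t', h1', by rw [← hts]; exact Ne.symm hne⟩
            · exact ⟨t, h1, hts⟩
          obtain ⟨t'', hc'', hts⟩ := hpick
          intro hzero
          have hz := haf (fun j => c (tOf k s j)) hzero (idxF s t'' (Ne.symm hts))
          rw [tOf_idxF] at hz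
          exact hc'' hz
      calc d * (k+1) = ∑ _s : Fin (k+1), d := by simp [Nat.mul_comm]
        _ ≤ _ := Finset.sum_le_sum (fun s _ => hblock s)
    · obtain ⟨t, ht⟩ := hc
      push_neg at h2
      have hone : ∑ t', c t' • shiftVec n k a t' = c t • shiftVec n k a t := by
        apply Finset.sum_eq_single
        · intro t' _ hne
          have : c t' = 0 := by
            by_contra hc'
            exact hne (h2 t' t hc' ht)
          simp [this]
        · intro h; exact absurd (Finset.mem_univ t) h
      rw [hone, wt_smul ht, wtbt t]
      exact hud
  refine ⟨?_, ⟨?_, ?_⟩, wtbt, wtsum⟩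
  · -- linear independence
    rw [Fintype.linearIndependent_iff]
    intro c hc0 t
    have hblocks : ∀ s j, c (tOf k s j) = 0 := by
      intro s j
      have hbs : blk (∑ t', c t' • shiftVec n k a t') s = 0 := by
        rw [hc0]; funext r; simp [blk]
      rw [blk_combo hn] at hbs
      exact haf _ hbs j
    have hst : tOf k t ⟨0, hk⟩ ≠ t := tOf_ne t _
    have := hblocks (tOf k t ⟨0, hk⟩) (idxF _ t hst)
    rwa [tOf_idxF] at this
  · -- min dist lower bound
    intro w hwmem hwne
    obtain ⟨c, rfl⟩ := Submodule.mem_span_range_iff_exists_fun F |>.mp hwmem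
    have hc : ∃ t, c t ≠ 0 := by
      by_contra hno
      push_neg at hno
      apply hwne
      simp [hno]
    exact key c hc
  · -- min dist witness
    refine ⟨∑ t, shiftVec n k a t,
      Submodule.sum_mem _ (fun t _ => Submodule.subset_span ⟨t, rfl⟩), ?_, wtsum⟩
    intro h0
    rw [h0, wt_zero] at wtsum
    have : 1 ≤ d * (k+1) := Nat.one_le_iff_ne_zero.mpr (by positivity)
    omega

end step




lemma prod_shift (k i : ℕ) :
    k * ∏ j ∈ Finset.range i, (k + j + 1) = (∏ j ∈ Finset.range i, (k + j)) * (k + i) := by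
  have h1 : (∏ j ∈ Finset.range i, (k+j)) * (k+i) = ∏ j ∈ Finset.range (i+1), (k+j) :=
    (Finset.prod_range_succ _ _).symm
  have h2 : ∏ j ∈ Finset.range (i+1), (k+j) = (∏ j ∈ Finset.range i, (k+j+1)) * k :=
    Finset.prod_range_succ' (fun j => k + j) i
  rw [h1, h2, Nat.mul_comm]

lemma iter_aux {F : Type*} [Field F] {n k : ℕ} (a : Fin k → Fin n → F)
    (ha : LinearIndependent F a) (u d : ℕ)
    (hmin : IsMinDist (Submodule.span F (Set.range a)) d)
    (hw : ∀ j, wt (a j) = u) (hsum : wt (∑ j, a j) = d)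
    (hud : d * (k + 1) ≤ u * k) :
    ∀ i, d * (k + i) ≤ u * k →
      LinearIndependent F (iterBasis n k a i) ∧
      IsMinDist (Submodule.span F (Set.range (iterBasis n k a i)))
        (d * ∏ j ∈ Finset.range i, (k + j + 1)) ∧
      (∀ t, wt (iterBasis n k a i t) = u * ∏ j ∈ Finset.range i, (k + j)) ∧
      wt (∑ t, iterBasis n k a i t) = d * ∏ j ∈ Finset.range i, (k + j + 1) := by
  intro i
  induction i with
  | zero =>
    intro _
    simpa using ⟨ha, hmin, hw, hsum⟩
  | succ i ih =>
    intro h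
    have hstepineq : d * (k + i) ≤ u * k :=
      le_trans (Nat.mul_le_mul_left d (by omega)) h
    obtain ⟨li, hm, hwt, hsw⟩ := ih hstepineq
    set P := ∏ j ∈ Finset.range i, (k + j + 1) with hP
    set Q := ∏ j ∈ Finset.range i, (k + j) with hQ
    have hkP : k * P = Q * (k + i) := prod_shift k i
    have hineq : (d * P) * ((k + i) + 1) ≤ (u * Q) * (k + i) := by
      calc (d * P) * ((k + i) + 1) = (d * (k + i + 1)) * P := by ring
        _ ≤ (u * k) * P := Nat.mul_le_mul_right P h
        _ = u * (k * P) := by ring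
        _ = u * (Q * (k + i)) := by rw [hkP]
        _ = (u * Q) * (k + i) := by ring
    obtain ⟨li', hm', hwt', hsw'⟩ :=
      step_lemma (iterBasis n k a i) li (u * Q) (d * P) hm hwt hsw hineq
    refine ⟨li', ?_, ?_, ?_⟩
    · rw [Finset.prod_range_succ, ← mul_assoc]; exact hm'
    · intro t; rw [Finset.prod_range_succ, ← mul_assoc]; exact hwt' t
    · rw [Finset.prod_range_succ, ← mul_assoc]; exact hsw' 


theorem iterCode_bounded (F : Type*) [Field F] (n k : ℕ)
    (a : Fin k → Fin n → F) (ha : LinearIndependent F a) (u d : ℕ)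
    (hb : UBounded a u d) (i : ℕ) (hi : 1 ≤ i) (hui : d * (k + i) ≤ u * k) :
    IsMinDist (Submodule.span F (Set.range (iterBasis n k a i)))
      (d * ∏ j ∈ Finset.range i, (k + j + 1)) ∧
    (UBounded (iterBasis n k a i) (u * ∏ j ∈ Finset.range i, (k + j))
        (d * ∏ j ∈ Finset.range i, (k + j + 1)) ↔ d * (k + i + 1) ≤ u * k) := by
  obtain ⟨hmin, hw, hsum, hud⟩ := hb
  obtain ⟨li, hm, hwt, hsw⟩ := iter_aux a ha u d hmin hw hsum hud i hui
  set P := ∏ j ∈ Finset.range i, (k + j + 1) with hP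
  set Q := ∏ j ∈ Finset.range i, (k + j) with hQ
  have hkP : k * P = Q * (k + i) := prod_shift k i
  have hPpos : 0 < P := Finset.prod_pos (fun j _ => by omega)
  refine ⟨hm, ?_, ?_⟩
  · intro hB
    obtain ⟨-, -, -, hineq⟩ := hB
    apply Nat.le_of_mul_le_mul_right _ hPpos
    calc d * (k + i + 1) * P = (d * P) * ((k + i) + 1) := by ring
      _ ≤ (u * Q) * (k + i) := hineq
      _ = u * (Q * (k + i)) := by ring
      _ = u * (k * P) := by rw [hkP]
      _ = u * k * P := by ring
  · intro h
    refine ⟨hm, hwt, hsw, ?_⟩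
    calc (d * P) * ((k + i) + 1) = (d * (k + i + 1)) * P := by ring
      _ ≤ (u * k) * P := Nat.mul_le_mul_right P h
      _ = u * (k * P) := by ring
      _ = u * (Q * (k + i)) := by rw [hkP]
      _ = (u * Q) * (k + i) := by ring
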